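/- Let F : ℝ² → ℝ² be an invertible affine map, F(x̂) = J x̂ + b with J an invertible linear map, and let v̂ : ℝ² → ℝ² be continuous with Piola transform v(x) = (1/|det J|) · J (v̂(F⁻¹(x))). Let ê = [p̂, q̂] be a segment with p̂ ≠ q̂ and let e = [F(p̂), F(q̂)] be its image. Define R : ℝ² → ℝ² by R(u₁, u₂) = (u₂, −u₁) (rotation by 90° clockwise), and set n̂ = R(q̂ − p̂)/‖q̂ − p̂‖ and n = R(F(q̂) − F(p̂))/‖F(q̂) − F(p̂)‖. Then the normal moments satisfy ∫_e v · n ds = sign(det J) · ∫_ê v̂ · n̂ dŝ. -/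

import Mathlib

open scoped RealInnerProductSpace
open MeasureTheory

noncomputable section

/-- Shorthand for the plane. -/
abbrev E2 := EuclideanSpace ℝ (Fin 2)

/-- The normal moment `∫_e w · n ds` of `w` over the segment `e = [p, q]`,
computed via the arclength parametrization `t ↦ (1 - t) p + t q`, `ds = ‖q - p‖ dt`. -/
def segInt (p q n : E2) (w : E2 → E2) : ℝ :=
  ∫ t in (0:ℝ)..1, ⟪w ((1 - t) • p + t • q), n⟫ * ‖q - p‖

/-- Rotation by 90° clockwise: `R(u₁, u₂) = (u₂, -u₁)`. -/
def rot (u : E2) : E2 := (WithLp.equiv 2 (Fin 2 → ℝ)).symm ![u 1, -u 0]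

lemma decompose (u : E2) :
    u = u 0 • EuclideanSpace.single (0 : Fin 2) (1:ℝ) + u 1 • EuclideanSpace.single 1 1 := by
  ext i
  fin_cases i <;> simp

lemma cross_map (J : E2 →ₗ[ℝ] E2) (u w : E2) :
    J u 0 * J w 1 - J u 1 * J w 0
      = LinearMap.det J * (u 0 * w 1 - u 1 * w 0) := by
  set B := (EuclideanSpace.basisFun (Fin 2) ℝ).toBasis
  have hdet : LinearMap.det J = Matrix.det (LinearMap.toMatrix B B J) := by
    rw [← LinearMap.det_toMatrix B]
  have hM : ∀ i j, LinearMap.toMatrix B B J i j = J (EuclideanSpace.single j 1) i := by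
    intro i j
    simp [LinearMap.toMatrix_apply, B, EuclideanSpace.basisFun_repr,
      EuclideanSpace.basisFun_apply]
  have h0 : ∀ x : E2, J x = x 0 • J (EuclideanSpace.single (0:Fin 2) (1:ℝ))
      + x 1 • J (EuclideanSpace.single 1 1) := by
    intro x
    conv_lhs => rw [decompose x]
    simp
  rw [hdet, Matrix.det_fin_two]
  rw [h0 u, h0 w]
  simp only [PiLp.add_apply, PiLp.smul_apply, smul_eq_mul, hM]
  ring

lemma inner_rot (a u : E2) : ⟪a, rot u⟫ = a 0 * u 1 - a 1 * u 0 := by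
  rw [PiLp.inner_apply, Fin.sum_univ_two]
  show u 1 * a 0 + (-u 0) * a 1 = _
  ring

lemma inner_rot_map (J : E2 →ₗ[ℝ] E2) (w u : E2) :
    ⟪J w, rot (J u)⟫ = LinearMap.det J * ⟪w, rot u⟫ := by
  rw [inner_rot, inner_rot, cross_map]

lemma map_ne_zero' (J : E2 →ₗ[ℝ] E2) (hJ : LinearMap.det J ≠ 0) {d : E2} (hd : d ≠ 0) :
    J d ≠ 0 := by
  intro h
  have h2 := cross_map J d (rot d)
  rw [h] at h2
  simp only [PiLp.zero_apply, zero_mul, mul_zero, sub_zero, zero_sub] at h2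
  have hr0 : rot d 0 = d 1 := rfl
  have hr1 : rot d 1 = -d 0 := rfl
  rw [hr0, hr1] at h2
  have hd2 : d 0 ≠ 0 ∨ d 1 ≠ 0 := by
    by_contra hc
    push_neg at hc
    exact hd (by ext i; fin_cases i <;> simp [hc.1, hc.2])
  have : LinearMap.det J * (d 0 * -d 0 - d 1 * d 1) = 0 := by linarith [h2]
  rcases mul_eq_zero.1 this with h' | h'
  · exact hJ h'
  · have h0 : d 0 ^ 2 + d 1 ^ 2 = 0 := by nlinarith
    have := sq_nonneg (d 0); have := sq_nonneg (d 1)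
    rcases hd2 with h1 | h1 <;> [skip; skip] <;> exact h1 (by nlinarith)

lemma abs_inv_mul_self {x : ℝ} (hx : x ≠ 0) : |x|⁻¹ * x = Real.sign x := by
  rcases hx.lt_or_gt with h | h
  · rw [abs_of_neg h, Real.sign_of_neg h]
    field_simp
  · rw [abs_of_pos h, Real.sign_of_pos h]
    field_simp

/-- Let `F(x̂) = J x̂ + b` be an invertible affine map of the plane and
`v` the Piola transform of a continuous map `v̂`.  For a segment `ê = [p̂, q̂]` with image
`e = [F(p̂), F(q̂)]` and the corresponding unit normals `n̂ = R(q̂ - p̂)/‖q̂ - p̂‖`,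
`n = R(F(q̂) - F(p̂))/‖F(q̂) - F(p̂)‖`, the normal moments satisfy
`∫_e v · n ds = sign(det J) ∫_ê v̂ · n̂ dŝ`. -/
theorem piola_preserves_normal_moment
    (J : E2 →L[ℝ] E2) (b : E2)
    (hJ : LinearMap.det (J : E2 →ₗ[ℝ] E2) ≠ 0)
    (vhat v : E2 → E2) (hcont : Continuous vhat)
    (hv : ∀ xhat, v (J xhat + b) =
      |LinearMap.det (J : E2 →ₗ[ℝ] E2)|⁻¹ • J (vhat xhat))
    (phat qhat : E2) (hpq : phat ≠ qhat)
    (nhat n : E2)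
    (hnhat : nhat = ‖qhat - phat‖⁻¹ • rot (qhat - phat))
    (hn : n = ‖(J qhat + b) - (J phat + b)‖⁻¹ • rot ((J qhat + b) - (J phat + b))) :
    segInt (J phat + b) (J qhat + b) n v =
      Real.sign (LinearMap.det (J : E2 →ₗ[ℝ] E2)) * segInt phat qhat nhat vhat := by
  set D := LinearMap.det (J : E2 →ₗ[ℝ] E2) with hD
  set d := qhat - phat with hdd
  have hdne : d ≠ 0 := sub_ne_zero.2 (Ne.symm hpq)
  have hJdsub : (J qhat + b) - (J phat + b) = (J : E2 →ₗ[ℝ] E2) d := by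
    simp [hdd, map_sub]
  have hJdne : (J : E2 →ₗ[ℝ] E2) d ≠ 0 := map_ne_zero' _ hJ hdne
  have hnd : ‖d‖ ≠ 0 := norm_ne_zero_iff.2 hdne
  have hnJd : ‖(J : E2 →ₗ[ℝ] E2) d‖ ≠ 0 := norm_ne_zero_iff.2 hJdne
  unfold segInt
  rw [← intervalIntegral.integral_const_mul]
  congr 1
  funext t
  set x := (1 - t) • phat + t • qhat with hx
  have h1 : (1 - t) • (J phat + b) + t • (J qhat + b) = J x + b := by
    have : (J : E2 →ₗ[ℝ] E2) x = (1 - t) • J phat + t • J qhat := by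
      simp [hx, map_add, _root_.map_smul]
    show _ = (J : E2 →ₗ[ℝ] E2) x + b
    rw [this]
    module
  rw [h1, hv x, hn, hnhat, hJdsub]
  rw [real_inner_smul_left, real_inner_smul_right, real_inner_smul_right,
    show J (vhat x) = (J : E2 →ₗ[ℝ] E2) (vhat x) from rfl, inner_rot_map, ← hD]
  set I := ⟪vhat x, rot d⟫ with hI
  have e1 : |D|⁻¹ * (‖(J : E2 →ₗ[ℝ] E2) d‖⁻¹ * (D * I)) * ‖(J : E2 →ₗ[ℝ] E2) d‖
      = (|D|⁻¹ * D) * I * (‖(J : E2 →ₗ[ℝ] E2) d‖⁻¹ * ‖(J : E2 →ₗ[ℝ] E2) d‖) := by ring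
  have e2 : Real.sign D * (‖d‖⁻¹ * I * ‖d‖) = Real.sign D * I * (‖d‖⁻¹ * ‖d‖) := by ring
  rw [e1, e2, inv_mul_cancel₀ hnJd, inv_mul_cancel₀ hnd, abs_inv_mul_self hJ]

end
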